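/- Let d ≥ 1 and let v_1, …, v_{d+1} ∈ ℝ^d satisfy the simplex conditions. Then for every w ∈ ℝ^d: w lies in the interior of the convex hull of {v_1, …, v_{d+1}} if and only if ⟨w, v_i⟩ > −1 for every i = 1, …, d+1. -/

import Mathlib

open scoped BigOperators

section SimplexAux

variable {d : ℕ}

private lemma gram_eq (v : Fin (d + 1) → Fin d → ℝ)
    (hnorm : ∀ i, ∑ k, v i k ^ 2 = (d : ℝ))
    (hinner : ∀ i j, i ≠ j → ∑ k, v i k * v j k = -1) (i j : Fin (d+1)) :
    ∑ k, v i k * v j k = if i = j then (d : ℝ) else -1 := by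
  by_cases h : i = j
  · subst h; simp only [if_pos rfl]
    simpa [sq] using hnorm i
  · simp [h, hinner i j h]

private lemma sum_v_eq_zero (v : Fin (d + 1) → Fin d → ℝ)
    (hnorm : ∀ i, ∑ k, v i k ^ 2 = (d : ℝ))
    (hinner : ∀ i j, i ≠ j → ∑ k, v i k * v j k = -1) (k : Fin d) :
    ∑ i, v i k = 0 := by
  have key : ∑ k : Fin d, (∑ i, v i k) ^ 2 = 0 := by
    have h1 : ∀ k : Fin d, (∑ i, v i k) ^ 2 = ∑ i, ∑ j, v i k * v j k := by
      intro k; rw [sq, Finset.sum_mul_sum]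
    rw [Finset.sum_congr rfl fun k _ => h1 k]
    rw [Finset.sum_comm]
    have h2 : ∀ i : Fin (d+1), ∑ k : Fin d, ∑ j, v i k * v j k = 0 := by
      intro i
      rw [Finset.sum_comm]
      rw [Finset.sum_congr rfl fun j _ => gram_eq v hnorm hinner i j]
      rw [← Finset.add_sum_erase _ _ (Finset.mem_univ i)]
      rw [if_pos rfl, Finset.sum_congr rfl (fun j hj => if_neg (Finset.ne_of_mem_erase hj).symm)]
      simp [Finset.sum_const, Finset.card_erase_of_mem]
    exact Finset.sum_eq_zero fun i _ => h2 i
  have h2 := (Finset.sum_eq_zero_iff_of_nonneg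
    (fun k _ => sq_nonneg (∑ i, v i k))).mp key k (Finset.mem_univ k)
  exact pow_eq_zero_iff (by norm_num) |>.mp h2

private lemma sum_inner_eq (v : Fin (d + 1) → Fin d → ℝ)
    (hnorm : ∀ i, ∑ k, v i k ^ 2 = (d : ℝ))
    (hinner : ∀ i j, i ≠ j → ∑ k, v i k * v j k = -1)
    (c : Fin (d+1) → ℝ) (j : Fin (d+1)) :
    ∑ k, (∑ i, c i * v i k) * v j k = (d+1 : ℝ) * c j - ∑ i, c i := by
  have h1 : ∀ k, (∑ i, c i * v i k) * v j k = ∑ i, c i * (v i k * v j k) := by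
    intro k
    rw [Finset.sum_mul]
    exact Finset.sum_congr rfl fun i _ => by ring
  calc ∑ k, (∑ i, c i * v i k) * v j k = ∑ k, ∑ i, c i * (v i k * v j k) :=
        Finset.sum_congr rfl fun k _ => h1 k
    _ = ∑ i, ∑ k, c i * (v i k * v j k) := Finset.sum_comm
    _ = ∑ i, c i * ∑ k, v i k * v j k :=
        Finset.sum_congr rfl fun i _ => (Finset.mul_sum _ _ _).symm
    _ = ∑ i, c i * (if i = j then (d:ℝ) else -1) :=
        Finset.sum_congr rfl fun i _ => by rw [gram_eq v hnorm hinner i j]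
    _ = (d+1 : ℝ) * c j - ∑ i, c i := by
        rw [← Finset.add_sum_erase _ _ (Finset.mem_univ j), if_pos rfl,
          Finset.sum_congr rfl (fun i hi => by rw [if_neg (Finset.ne_of_mem_erase hi)]),
          ← Finset.add_sum_erase _ c (Finset.mem_univ j)]
        simp only [mul_neg, mul_one, Finset.sum_neg_distrib]
        ring

private lemma exists_rep (v : Fin (d + 1) → Fin d → ℝ)
    (hnorm : ∀ i, ∑ k, v i k ^ 2 = (d : ℝ))
    (hinner : ∀ i j, i ≠ j → ∑ k, v i k * v j k = -1) (w : Fin d → ℝ) :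
    ∃ c : Fin (d+1) → ℝ, ∀ k, ∑ i, c i * v i k = w k := by
  classical
  set M : Matrix (Fin d) (Fin (d+1)) ℝ := Matrix.of (fun k i => v i k) with hM
  set φ : (Fin (d+1) → ℝ) →ₗ[ℝ] (Fin d → ℝ) := M.mulVecLin with hφdef
  have hφ : ∀ c k, φ c k = ∑ i, c i * v i k := by
    intro c k
    simp [hφdef, hM, Matrix.mulVecLin, Matrix.mulVec, dotProduct, mul_comm]
  have hker : LinearMap.ker φ = Submodule.span ℝ {(fun _ => (1:ℝ) : Fin (d+1) → ℝ)} := by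
    apply le_antisymm
    · intro c hc
      rw [LinearMap.mem_ker] at hc
      have hc' : ∀ j, (d+1 : ℝ) * c j - ∑ i, c i = 0 := by
        intro j
        rw [← sum_inner_eq v hnorm hinner c j]
        have : ∀ k, ∑ i, c i * v i k = 0 := by
          intro k; rw [← hφ, hc]; rfl
        simp [this]
      rw [Submodule.mem_span_singleton]
      refine ⟨(∑ i, c i) / (d+1), ?_⟩
      funext j
      have h := hc' j
      have hd1 : (d+1:ℝ) ≠ 0 := by positivity
      simp only [Pi.smul_apply, smul_eq_mul, mul_one]
      field_simp
      linarith [h]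
    · rw [Submodule.span_le, Set.singleton_subset_iff]
      rw [SetLike.mem_coe, LinearMap.mem_ker]
      funext k
      rw [hφ]
      simpa using sum_v_eq_zero v hnorm hinner k
  have h1ne : (fun _ => (1:ℝ) : Fin (d+1) → ℝ) ≠ 0 := by
    intro h
    have h0 := congrFun h 0
    simp at h0
  have hkrank : Module.finrank ℝ (LinearMap.ker φ) = 1 := by
    rw [hker, finrank_span_singleton h1ne]
  have hrn := LinearMap.finrank_range_add_finrank_ker φ
  rw [hkrank, Module.finrank_fintype_fun_eq_card] at hrn
  have hrange : LinearMap.range φ = ⊤ := by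
    apply Submodule.eq_top_of_finrank_eq
    rw [Module.finrank_fintype_fun_eq_card]
    simp at hrn ⊢
    omega
  have hw : w ∈ LinearMap.range φ := by rw [hrange]; trivial
  obtain ⟨c, hc⟩ := hw
  exact ⟨c, fun k => by rw [← hφ, hc]⟩

private lemma rep_eq (v : Fin (d + 1) → Fin d → ℝ)
    (hnorm : ∀ i, ∑ k, v i k ^ 2 = (d : ℝ))
    (hinner : ∀ i j, i ≠ j → ∑ k, v i k * v j k = -1) (w : Fin d → ℝ) (k : Fin d) :
    ∑ i, ((∑ l, w l * v i l + 1) / ((d:ℝ)+1)) * v i k = w k := by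
  obtain ⟨c, hc⟩ := exists_rep v hnorm hinner w
  have hd1 : (d+1:ℝ) ≠ 0 := by positivity
  have ht : ∀ i, (∑ l, w l * v i l + 1) / ((d:ℝ)+1)
      = c i + (1 - ∑ j, c j) / ((d:ℝ)+1) := by
    intro i
    have h1 : ∑ l, w l * v i l = (d+1:ℝ) * c i - ∑ j, c j := by
      rw [← sum_inner_eq v hnorm hinner c i]
      exact Finset.sum_congr rfl fun l _ => by rw [hc l]
    rw [h1]
    field_simp
    ring
  rw [Finset.sum_congr rfl fun i _ => by rw [ht i]]
  calc ∑ i, (c i + (1 - ∑ j, c j) / ((d:ℝ)+1)) * v i k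
      = ∑ i, (c i * v i k + ((1 - ∑ j, c j) / ((d:ℝ)+1)) * v i k) :=
        Finset.sum_congr rfl fun i _ => by ring
    _ = (∑ i, c i * v i k) + ((1 - ∑ j, c j) / ((d:ℝ)+1)) * ∑ i, v i k := by
        rw [Finset.sum_add_distrib, Finset.mul_sum]
    _ = w k := by rw [hc k, sum_v_eq_zero v hnorm hinner k]; ring

private lemma sum_coeff_eq_one (v : Fin (d + 1) → Fin d → ℝ)
    (hnorm : ∀ i, ∑ k, v i k ^ 2 = (d : ℝ))
    (hinner : ∀ i j, i ≠ j → ∑ k, v i k * v j k = -1) (w : Fin d → ℝ) :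
    ∑ i, (∑ l, w l * v i l + 1) / ((d:ℝ)+1) = 1 := by
  have h0 : ∑ i, ∑ l, w l * v i l = 0 := by
    rw [Finset.sum_comm]
    apply Finset.sum_eq_zero
    intro l _
    rw [← Finset.mul_sum, sum_v_eq_zero v hnorm hinner l, mul_zero]
  rw [← Finset.sum_div, Finset.sum_add_distrib, h0]
  simp
  have hd1 : (d+1:ℝ) ≠ 0 := by positivity
  field_simp
  exact hd1

end SimplexAux

/-- `w` lies in the interior of the convex hull of the simplex vectors
iff `⟨w, vᵢ⟩ > -1` for every `i`. -/
theorem mem_interior_convexHull_simplex_iff (d : ℕ) (hd : 1 ≤ d)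
    (v : Fin (d + 1) → Fin d → ℝ)
    (hnorm : ∀ i, ∑ k, v i k ^ 2 = (d : ℝ))
    (hinner : ∀ i j, i ≠ j → ∑ k, v i k * v j k = -1)
    (w : Fin d → ℝ) :
    w ∈ interior (convexHull ℝ (Set.range v)) ↔ ∀ i, ∑ k, w k * v i k > -1 := by
  constructor
  · intro hw i
    have hsub : convexHull ℝ (Set.range v) ⊆ {u : Fin d → ℝ | -1 ≤ ∑ k, u k * v i k} := by
      apply convexHull_min
      · rintro _ ⟨j, rfl⟩
        simp only [Set.mem_setOf_eq]
        rw [gram_eq v hnorm hinner j i]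
        split_ifs
        · have : (0:ℝ) ≤ d := Nat.cast_nonneg d
          linarith
        · exact le_rfl
      · exact convex_halfSpace_ge
          ⟨fun x y => by simp [add_mul, Finset.sum_add_distrib],
           fun r x => by
             simp only [Pi.smul_apply, smul_eq_mul, Finset.mul_sum]
             exact Finset.sum_congr rfl fun k _ => by ring⟩ (-1)
    obtain ⟨ε, hε, hball⟩ := Metric.isOpen_iff.mp isOpen_interior w hw
    set δ := ε / (2 * (‖v i‖ + 1)) with hδ
    have hδpos : 0 < δ := by positivity
    have hmem : w - δ • v i ∈ convexHull ℝ (Set.range v) := by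
      apply interior_subset
      apply hball
      rw [Metric.mem_ball, dist_eq_norm]
      have he : w - δ • v i - w = -(δ • v i) := by abel
      rw [he, norm_neg, norm_smul, Real.norm_eq_abs, abs_of_pos hδpos]
      have hn : (0:ℝ) ≤ ‖v i‖ := norm_nonneg _
      rw [hδ]
      rw [div_mul_eq_mul_div]
      rw [div_lt_iff₀ (by positivity)]
      nlinarith
    have h1 := hsub hmem
    simp only [Set.mem_setOf_eq] at h1
    have h2 : ∑ k, (w - δ • v i) k * v i k = (∑ k, w k * v i k) - δ * d := by
      have : ∀ k, (w - δ • v i) k * v i k = w k * v i k - δ * (v i k ^ 2) := by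
        intro k
        simp only [Pi.sub_apply, Pi.smul_apply, smul_eq_mul]
        ring
      rw [Finset.sum_congr rfl fun k _ => this k, Finset.sum_sub_distrib,
        ← Finset.mul_sum, hnorm i]
    rw [h2] at h1
    have hd' : (1:ℝ) ≤ d := by exact_mod_cast hd
    nlinarith
  · intro h
    have hd1 : (0:ℝ) < (d:ℝ)+1 := by positivity
    set T := {u : Fin d → ℝ | ∀ i, -1 < ∑ k, u k * v i k} with hT
    have hTopen : IsOpen T := by
      have : T = ⋂ i, {u : Fin d → ℝ | -1 < ∑ k, u k * v i k} := by
        ext u; simp [hT]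
      rw [this]
      apply isOpen_iInter_of_finite
      intro i
      exact isOpen_lt continuous_const
        (continuous_finset_sum _ fun k _ => (continuous_apply k).mul continuous_const)
    have hTS : T ⊆ convexHull ℝ (Set.range v) := by
      intro u hu
      set t : Fin (d+1) → ℝ := fun i => (∑ l, u l * v i l + 1) / ((d:ℝ)+1) with htdef
      have htpos : ∀ i, 0 < t i := by
        intro i
        apply div_pos _ hd1
        have := hu i
        linarith
      have hts : ∑ i, t i = 1 := sum_coeff_eq_one v hnorm hinner u
      have hcm := Finset.centerMass_mem_convexHull (Finset.univ : Finset (Fin (d+1)))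
        (fun i _ => (htpos i).le) (by rw [hts]; norm_num)
        (fun i _ => Set.mem_range_self i (f := v))
      rw [Finset.centerMass_eq_of_sum_1 _ _ hts] at hcm
      have : ∑ i, t i • v i = u := by
        funext k
        rw [Finset.sum_apply]
        simp only [Pi.smul_apply, smul_eq_mul]
        exact rep_eq v hnorm hinner u k
      rwa [this] at hcm
    exact interior_maximal hTS hTopen h
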